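/- For any real ε > 0, the quantity (2+ε)^(2+ε) / (2^(2+ε) · (1+ε)^(1+ε)) is strictly less than 1. -/
import Mathlib

theorem base_lt_one (ε : ℝ) (hε : 0 < ε) :
    (2 + ε) ^ (2 + ε) / (2 ^ (2 + ε) * (1 + ε) ^ (1 + ε)) < 1 := by
  have h1 : (0:ℝ) < 1 + ε := by linarith
  have h2 : (0:ℝ) < 2 + ε := by linarith
  have hconv := Real.strictConvexOn_mul_log.2 (Set.mem_Ici.2 zero_le_one)
    (Set.mem_Ici.2 h1.le) (by linarith : (1:ℝ) ≠ 1 + ε)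
    (by norm_num : (0:ℝ) < 1/2) (by norm_num : (0:ℝ) < 1/2) (by norm_num)
  simp only [smul_eq_mul, Real.log_one, mul_one] at hconv
  have hmid : (1/2 : ℝ) + 1/2 * (1 + ε) = (2 + ε)/2 := by ring
  rw [hmid] at hconv
  have hlog : Real.log ((2 + ε)/2) = Real.log (2 + ε) - Real.log 2 := by
    rw [Real.log_div h2.ne' (by norm_num)]
  rw [hlog] at hconv
  -- key inequality on logs
  have key : (2 + ε) * Real.log (2 + ε) <
      (2 + ε) * Real.log 2 + (1 + ε) * Real.log (1 + ε) := by nlinarith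
  have hexp : (2 + ε) ^ (2 + ε) < 2 ^ (2 + ε) * (1 + ε) ^ (1 + ε) := by
    have := Real.exp_lt_exp.2 key
    rwa [Real.exp_add, ← Real.log_rpow h2, ← Real.log_rpow (by norm_num : (0:ℝ) < 2),
      ← Real.log_rpow h1, Real.exp_log (Real.rpow_pos_of_pos h2 _),
      Real.exp_log (Real.rpow_pos_of_pos (by norm_num) _),
      Real.exp_log (Real.rpow_pos_of_pos h1 _)] at this
  rw [div_lt_one (by positivity)]
  exact hexp
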